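/- In the set of all Hilbert polynomials, i.e. the set of Macaulay polynomials P_a for weakly decreasing tuples a of nonnegative integers, every strictly descending sequence P_1 > P_2 > P_3 > … (with respect to eventual domination) is finite; equivalently, the strict eventual-domination order on this set is well-founded. -/

import Mathlib

/-- The value at the integer `n` of the Macaulay polynomial
`P_a(T) = Σ_{i=1}^{s} binom(T + a_i − i + 1, a_i)` associated to a weakly decreasing
tuple `a = (a_1 ≥ … ≥ a_s ≥ 0)` (here indexed by `i : Fin s`, zero-based, so the
`i`-th summand is `binom(T + a_i − i, a_i)` evaluated at `n`). -/
noncomputable def macaulayEval {s : ℕ} (a : Fin s → ℕ) (n : ℤ) : ℚ :=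
  ∑ i : Fin s,
    (∏ j ∈ Finset.range (a i), ((n : ℚ) + (a i : ℚ) - (i : ℕ) - (j : ℚ))) /
      (Nat.factorial (a i) : ℚ)

/-! ### Rational-valued binomial terms and their estimates -/

noncomputable def termQ (c i : ℕ) (q : ℚ) : ℚ :=
  (∏ j ∈ Finset.range c, (q + c - i - j)) / (Nat.factorial c : ℚ)

lemma termQ_lb {c i : ℕ} {q : ℚ} (h : (i : ℚ) ≤ q) :
    (q - i + 1) ^ c / (Nat.factorial c : ℚ) ≤ termQ c i q := by
  unfold termQ
  have hfac : (0:ℚ) < (Nat.factorial c : ℚ) := by exact_mod_cast c.factorial_pos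
  gcongr ?_ / _
  calc (q - i + 1) ^ c = ∏ _j ∈ Finset.range c, (q - i + 1) := by
        rw [Finset.prod_const, Finset.card_range]
    _ ≤ ∏ j ∈ Finset.range c, (q + c - i - j) := by
        apply Finset.prod_le_prod
        · intro j _; linarith
        · intro j hj
          have : (j:ℚ) + 1 ≤ c := by
            exact_mod_cast Nat.succ_le_of_lt (Finset.mem_range.mp hj)
          linarith

lemma termQ_pos {c i : ℕ} {q : ℚ} (h : (i : ℚ) ≤ q) : 0 < termQ c i q := by
  have hfac : (0:ℚ) < (Nat.factorial c : ℚ) := by exact_mod_cast c.factorial_pos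
  have : (0:ℚ) < (q - i + 1) ^ c / (Nat.factorial c : ℚ) := by
    apply div_pos (pow_pos (by linarith) c) hfac
  exact this.trans_le (termQ_lb h)

lemma termQ_ub {c i : ℕ} {q : ℚ} (h : (i : ℚ) ≤ q) : termQ c i q ≤ (q + c) ^ c := by
  unfold termQ
  have hfac : (1:ℚ) ≤ (Nat.factorial c : ℚ) := by exact_mod_cast c.factorial_pos
  have hprod : ∏ j ∈ Finset.range c, (q + c - i - j) ≤ (q + c) ^ c := by
    calc ∏ j ∈ Finset.range c, (q + c - i - j) ≤ ∏ _j ∈ Finset.range c, (q + c) := by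
          apply Finset.prod_le_prod
          · intro j hj
            have : (j:ℚ) + 1 ≤ c := by
              exact_mod_cast Nat.succ_le_of_lt (Finset.mem_range.mp hj)
            linarith
          · intro j _
            have h1 : (0:ℚ) ≤ i := by positivity
            have h2 : (0:ℚ) ≤ j := by positivity
            linarith
      _ = (q + c) ^ c := by rw [Finset.prod_const, Finset.card_range]
  have hnn : (0:ℚ) ≤ ∏ j ∈ Finset.range c, (q + c - i - j) := by
    apply Finset.prod_nonneg
    intro j hj
    have : (j:ℚ) + 1 ≤ c := by
      exact_mod_cast Nat.succ_le_of_lt (Finset.mem_range.mp hj)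
    linarith
  calc (∏ j ∈ Finset.range c, (q + c - i - j)) / (Nat.factorial c : ℚ)
      ≤ ∏ j ∈ Finset.range c, (q + c - i - j) := div_le_self hnn hfac
    _ ≤ (q + c) ^ c := hprod

/-! ### The Macaulay sums indexed over `ℕ` -/

noncomputable def msum (p : ℕ) (f : ℕ → ℕ) (q : ℚ) : ℚ :=
  ∑ i ∈ Finset.range p, termQ (f i) i q

lemma msum_split {p k : ℕ} (hk : k ≤ p) (f : ℕ → ℕ) (q : ℚ) :
    msum p f q = msum k f q + ∑ i ∈ Finset.Ico k p, termQ (f i) i q := by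
  unfold msum
  simp only [Finset.range_eq_Ico]
  exact (Finset.sum_Ico_consecutive _ (Nat.zero_le k) hk).symm

lemma msum_prefix_le {p p' : ℕ} (f g : ℕ → ℕ) (hpp : p ≤ p')
    (hagree : ∀ i < p, f i = g i) {q : ℚ} (hq : (p' : ℚ) ≤ q) :
    msum p f q ≤ msum p' g q := by
  have hiq : ∀ i, i < p' → (i : ℚ) ≤ q := by
    intro i hi
    have : (i : ℚ) < (p' : ℚ) := by exact_mod_cast hi
    linarith
  have h1 : msum p f q = msum p g q := by
    unfold msum
    exact Finset.sum_congr rfl fun i hi => by rw [hagree i (Finset.mem_range.mp hi)]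
  rw [h1, msum_split hpp g q]
  have h2 : 0 ≤ ∑ i ∈ Finset.Ico p p', termQ (g i) i q := by
    apply Finset.sum_nonneg
    intro i hi
    exact (termQ_pos (hiq i (Finset.mem_Ico.mp hi).2)).le
  linarith

lemma msum_lt {p p' k : ℕ} (f g : ℕ → ℕ) (hk : k < p) (hk' : k < p')
    (hagree : ∀ i < k, f i = g i) (hlt : f k < g k)
    (hant : ∀ i, k ≤ i → i < p → f i ≤ f k) :
    ∀ q : ℚ, ((p + p' + k + p * Nat.factorial (g k) * (k + f k + 1) ^ f k + 1 : ℕ) : ℚ) ≤ q →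
      msum p f q < msum p' g q := by
  intro q hq
  set d := f k with hd
  set e := g k with he
  push_cast at hq
  have h0p : (0:ℚ) ≤ p := Nat.cast_nonneg p
  have h0p' : (0:ℚ) ≤ p' := Nat.cast_nonneg p'
  have h0k : (0:ℚ) ≤ k := Nat.cast_nonneg k
  have h0C : (0:ℚ) ≤ (p:ℚ) * Nat.factorial e * ((k:ℚ) + d + 1) ^ d := by positivity
  have hp : (p : ℚ) ≤ q := by linarith
  have hp' : (p' : ℚ) ≤ q := by linarith
  have hkq : (k : ℚ) ≤ q := by linarith
  have hq1 : (1:ℚ) ≤ q := by linarith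
  have hiq : ∀ i : ℕ, (i:ℚ) < (max p p' : ℕ) → (i : ℚ) ≤ q := by
    intro i hi
    have : ((max p p' : ℕ) : ℚ) ≤ q := by
      rcases max_choice p p' with h | h <;> rw [h] <;> assumption
    linarith
  set x := q - k + 1 with hxdef
  have hx1 : (1:ℚ) ≤ x := by linarith
  have hxC : (p:ℚ) * Nat.factorial e * ((k:ℚ) + d + 1) ^ d + 1 ≤ x := by linarith
  have hhead : msum k f q = msum k g q := by
    unfold msum
    exact Finset.sum_congr rfl fun i hi => by rw [hagree i (Finset.mem_range.mp hi)]
  have htailf : ∑ i ∈ Finset.Ico k p, termQ (f i) i q ≤ (p:ℚ) * (q + d) ^ d := by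
    have hbd : ∀ i ∈ Finset.Ico k p, termQ (f i) i q ≤ (q + d) ^ d := by
      intro i hi
      obtain ⟨hi1, hi2⟩ := Finset.mem_Ico.mp hi
      have hiq' : (i : ℚ) ≤ q := by
        apply hiq
        have h1 : (i:ℚ) < p := by exact_mod_cast hi2
        have h2 : (p:ℚ) ≤ ((max p p' : ℕ):ℚ) := by exact_mod_cast le_max_left p p'
        linarith
      have hfi : f i ≤ d := hant i hi1 hi2
      calc termQ (f i) i q ≤ (q + f i) ^ f i := termQ_ub hiq'
        _ ≤ (q + d) ^ f i := by
            apply pow_le_pow_left₀ (by linarith [Nat.cast_nonneg (α := ℚ) (f i)])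
            have : ((f i : ℕ):ℚ) ≤ (d:ℚ) := by exact_mod_cast hfi
            linarith
        _ ≤ (q + d) ^ d := by
            apply pow_le_pow_right₀ (by linarith [Nat.cast_nonneg (α := ℚ) d]) hfi
    calc ∑ i ∈ Finset.Ico k p, termQ (f i) i q
        ≤ (Finset.Ico k p).card • ((q + d) ^ d) := Finset.sum_le_card_nsmul _ _ _ hbd
      _ = ((p - k : ℕ) : ℚ) * (q + d) ^ d := by rw [Nat.card_Ico, nsmul_eq_mul]
      _ ≤ (p:ℚ) * (q + d) ^ d := by
          apply mul_le_mul_of_nonneg_right _ (by positivity)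
          exact_mod_cast Nat.sub_le p k
  have hterm_lb : x ^ e / (Nat.factorial e : ℚ) ≤ termQ e k q := termQ_lb hkq
  have htailg : termQ e k q ≤ ∑ i ∈ Finset.Ico k p', termQ (g i) i q := by
    apply Finset.single_le_sum (f := fun i => termQ (g i) i q)
    · intro i hi
      obtain ⟨_, hi2⟩ := Finset.mem_Ico.mp hi
      apply (termQ_pos _).le
      apply hiq
      have h1 : (i:ℚ) < p' := by exact_mod_cast hi2
      have h2 : (p':ℚ) ≤ ((max p p' : ℕ):ℚ) := by exact_mod_cast le_max_right p p'
      linarith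
    · exact Finset.mem_Ico.mpr ⟨le_refl k, hk'⟩
  have hkey : (p:ℚ) * (q + d) ^ d < x ^ e / (Nat.factorial e : ℚ) := by
    have hfe : (0:ℚ) < (Nat.factorial e : ℚ) := by exact_mod_cast e.factorial_pos
    rw [lt_div_iff₀ hfe]
    have h2 : q + d ≤ ((k:ℚ) + d + 1) * x := by
      nlinarith [mul_le_mul_of_nonneg_left hx1
        (show (0:ℚ) ≤ (k:ℚ) + (d:ℚ) by positivity)]
    have h0qd : (0:ℚ) ≤ q + d := by linarith [Nat.cast_nonneg (α := ℚ) d]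
    have h3 : (q + d) ^ d ≤ (((k:ℚ) + d + 1) * x) ^ d := pow_le_pow_left₀ h0qd h2 d
    have hxd1 : (1:ℚ) ≤ x ^ d := one_le_pow₀ hx1
    have h5 : x ^ (d + 1) ≤ x ^ e := pow_le_pow_right₀ hx1 hlt
    calc (p:ℚ) * (q + d) ^ d * Nat.factorial e
        ≤ (p:ℚ) * ((((k:ℚ) + d + 1)) ^ d * x ^ d) * Nat.factorial e := by
          rw [mul_pow] at h3
          gcongr
      _ = ((p:ℚ) * Nat.factorial e * ((k:ℚ) + d + 1) ^ d) * x ^ d := by ring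
      _ < ((p:ℚ) * Nat.factorial e * ((k:ℚ) + d + 1) ^ d + 1) * x ^ d := by
          nlinarith
      _ ≤ x * x ^ d := mul_le_mul_of_nonneg_right hxC (by positivity)
      _ = x ^ (d + 1) := by ring
      _ ≤ x ^ e := h5
  rw [msum_split hk.le f q, msum_split hk'.le g q, hhead]
  linarith

/-! ### Ordinal-valued measure of a weakly decreasing word -/

noncomputable def oword (p : ℕ) (f : ℕ → ℕ) : Ordinal.{0} :=
  ((List.range p).map fun i => Ordinal.omega0 ^ (f i : Ordinal)).sum

lemma olist_sum_lt (c : Ordinal) :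
    ∀ l : List Ordinal, (∀ x ∈ l, x < Ordinal.omega0 ^ c) →
      l.sum < Ordinal.omega0 ^ c
  | [], _ => by simpa using Ordinal.opow_pos c Ordinal.omega0_pos
  | a :: l, h => by
      rw [List.sum_cons]
      exact Ordinal.principal_add_omega0_opow c (h a (by simp))
        (olist_sum_lt c l fun x hx => h x (by simp [hx]))

lemma oword_split {k p : ℕ} (hk : k ≤ p) (f : ℕ → ℕ) :
    oword p f = oword k f +
      ((List.range (p - k)).map fun j => Ordinal.omega0 ^ (f (k + j) : Ordinal)).sum := by
  unfold oword
  conv_lhs => rw [show p = k + (p - k) from (Nat.add_sub_cancel' hk).symm]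
  rw [List.range_add, List.map_append, List.sum_append, List.map_map]
  rfl

lemma oword_succ (k : ℕ) (f : ℕ → ℕ) :
    oword (k + 1) f = oword k f + Ordinal.omega0 ^ (f k : Ordinal) := by
  unfold oword
  rw [List.range_succ, List.map_append, List.sum_append]
  simp

lemma oword_congr {p : ℕ} {f g : ℕ → ℕ} (h : ∀ i < p, f i = g i) :
    oword p f = oword p g := by
  unfold oword
  congr 1
  apply List.map_congr_left
  intro i hi
  rw [h i (List.mem_range.mp hi)]

lemma oword_mono {k p : ℕ} (hk : k ≤ p) (f : ℕ → ℕ) : oword k f ≤ oword p f := by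
  rw [oword_split hk f]
  exact le_self_add

lemma oword_lt_of_prefix {p p' : ℕ} {f g : ℕ → ℕ} (hpp : p < p')
    (hagree : ∀ i < p, f i = g i) : oword p f < oword p' g := by
  calc oword p f = oword p g := oword_congr hagree
    _ < oword p g + Ordinal.omega0 ^ (g p : Ordinal) :=
        lt_add_of_pos_right _ (Ordinal.opow_pos _ Ordinal.omega0_pos)
    _ = oword (p + 1) g := (oword_succ p g).symm
    _ ≤ oword p' g := oword_mono hpp g

lemma oword_lt_of_diff {p p' k : ℕ} {f g : ℕ → ℕ} (hk : k < p) (hk' : k < p')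
    (hagree : ∀ i < k, f i = g i) (hlt : f k < g k)
    (hant : ∀ i, k ≤ i → i < p → f i ≤ f k) : oword p f < oword p' g := by
  rw [oword_split hk.le f, oword_split hk'.le g, oword_congr hagree]
  apply (add_lt_add_iff_left _).mpr
  have h1 : ((List.range (p - k)).map fun j =>
      Ordinal.omega0 ^ (f (k + j) : Ordinal)).sum <
      Ordinal.omega0 ^ ((g k : ℕ) : Ordinal) := by
    have h2 : ((List.range (p - k)).map fun j =>
        Ordinal.omega0 ^ (f (k + j) : Ordinal)).sum <
        Ordinal.omega0 ^ ((f k + 1 : ℕ) : Ordinal) := by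
      apply olist_sum_lt
      intro x hx
      obtain ⟨j, hj, rfl⟩ := List.mem_map.mp hx
      have hj' : j < p - k := List.mem_range.mp hj
      have hle : f (k + j) ≤ f k := hant (k + j) (Nat.le_add_right k j) (by omega)
      apply (Ordinal.opow_lt_opow_iff_right Ordinal.one_lt_omega0).mpr
      exact_mod_cast Nat.lt_succ_of_le hle
    refine h2.trans_le (Ordinal.opow_le_opow_right Ordinal.omega0_pos ?_)
    exact_mod_cast hlt
  refine h1.trans_le ?_
  obtain ⟨m, hm⟩ : ∃ m, p' - k = m + 1 := ⟨p' - k - 1, by omega⟩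
  rw [hm, List.range_succ_eq_map, List.map_cons, List.sum_cons, Nat.add_zero]
  exact le_self_add

/-! ### Extending a tuple on `Fin s` to `ℕ`, and evaluation -/

def extW {s : ℕ} (a : Fin s → ℕ) : ℕ → ℕ := fun i => if h : i < s then a ⟨i, h⟩ else 0

lemma extW_ant {s : ℕ} (a : Fin s → ℕ) (ha : Antitone a) :
    ∀ k i, k ≤ i → i < s → extW a i ≤ extW a k := by
  intro k i h1 h2
  unfold extW
  rw [dif_pos h2, dif_pos (h1.trans_lt h2)]
  exact ha (Fin.mk_le_mk.mpr h1)

lemma macaulayEval_eq {s : ℕ} (a : Fin s → ℕ) (n : ℤ) :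
    macaulayEval a n = msum s (extW a) (n : ℚ) := by
  unfold msum
  rw [← Fin.sum_univ_eq_sum_range (fun i => termQ (extW a i) i (n:ℚ)) s]
  unfold macaulayEval termQ extW
  apply Finset.sum_congr rfl
  intro i _
  rw [dif_pos i.isLt]

/-- In the set of all Hilbert polynomials (= Macaulay polynomials), every strictly
descending sequence with respect to eventual domination is finite: there is no
infinite sequence of Macaulay polynomials each eventually strictly dominating
the next. -/
theorem stmt8 (s : ℕ → ℕ) (hs : ∀ m, 1 ≤ s m)
    (a : ∀ m : ℕ, Fin (s m) → ℕ) (ha : ∀ m, Antitone (a m)) :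
    ¬ (∀ m : ℕ, ∃ N : ℤ, ∀ n ≥ N, macaulayEval (a (m + 1)) n < macaulayEval (a m) n) := by
  intro H
  have key : ∀ m, oword (s (m+1)) (extW (a (m+1))) < oword (s m) (extW (a m)) := by
    intro m
    obtain ⟨N, hN⟩ := H m
    set p := s (m+1) with hp
    set p' := s m with hp'
    set f := extW (a (m+1)) with hf
    set g := extW (a m) with hg
    have hN' : ∀ n : ℤ, N ≤ n → msum p f (n:ℚ) < msum p' g (n:ℚ) := by
      intro n hn
      have := hN n hn
      rwa [macaulayEval_eq, macaulayEval_eq] at this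
    have hantf : ∀ k i, k ≤ i → i < p → f i ≤ f k := extW_ant _ (ha (m+1))
    have hantg : ∀ k i, k ≤ i → i < p' → g i ≤ g k := extW_ant _ (ha m)
    by_cases hex : ∃ i, i < p ∧ i < p' ∧ f i ≠ g i
    · set k := Nat.find hex with hkdef
      obtain ⟨hkp, hkp', hne⟩ := Nat.find_spec hex
      have hagree : ∀ i < k, f i = g i := by
        intro i hi
        by_contra hne'
        exact Nat.find_min hex hi ⟨by omega, by omega, hne'⟩
      rcases Nat.lt_or_ge (f k) (g k) with hfg | hfg
      · exact oword_lt_of_diff hkp hkp' hagree hfg (fun i h1 h2 => hantf k i h1 h2)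
      · exfalso
        have hgf : g k < f k := lt_of_le_of_ne hfg (Ne.symm hne)
        have hM := msum_lt g f hkp' hkp (fun i hi => (hagree i hi).symm) hgf
          (fun i h1 h2 => hantg k i h1 h2)
        set M : ℕ := p' + p + k + p' * Nat.factorial (f k) * (k + g k + 1) ^ g k + 1 with hMdef
        have hn1 : N ≤ max N (M : ℤ) := le_max_left _ _
        have hn2 : ((M:ℕ):ℚ) ≤ (((max N (M:ℤ)) : ℤ):ℚ) := by
          have h := le_max_right N (M:ℤ)
          exact_mod_cast h
        exact absurd (hN' _ hn1) (not_lt.mpr (hM _ hn2).le)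
    · push_neg at hex
      rcases Nat.lt_or_ge p p' with hpp | hpp
      · exact oword_lt_of_prefix hpp (fun i hi => hex i hi (hi.trans hpp))
      · exfalso
        have hA : msum p' g ((max N (p:ℤ) : ℤ):ℚ) ≤ msum p f ((max N (p:ℤ) : ℤ):ℚ) := by
          apply msum_prefix_le g f hpp (fun i hi => (hex i (lt_of_lt_of_le hi hpp) hi).symm)
          have h := le_max_right N (p:ℤ)
          exact_mod_cast h
        exact absurd (hN' _ (le_max_left _ _)) (not_lt.mpr hA)
  have hne : (Set.range (fun m => oword (s m) (extW (a m)))).Nonempty :=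
    ⟨_, ⟨0, rfl⟩⟩
  obtain ⟨m, hm⟩ := Ordinal.lt_wf.min_mem _ hne
  exact WellFounded.not_lt_min Ordinal.lt_wf (Set.range fun m => oword (s m) (extW (a m)))
    (x := oword (s (m + 1)) (extW (a (m + 1)))) ⟨m + 1, rfl⟩ (lt_of_lt_of_eq (key m) hm)
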